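/- Let Q : ℍ → ℍ be continuous at 0 and suppose the limit l₀ = lim_{λ→0, λ≠0} λ·Q(λ)·λ⁻¹ exists. Then l₀ = Q(0). -/
import Mathlib


theorem stmt_8 (Q : Quaternion ℝ → Quaternion ℝ) (hQ : ContinuousAt Q 0)
    (l₀ : Quaternion ℝ)
    (hlim : Filter.Tendsto (fun l : Quaternion ℝ => l * Q l * l⁻¹)
      (nhdsWithin 0 {0}ᶜ) (nhds l₀)) :
    l₀ = Q 0 := by
  have hcoe : Filter.Tendsto (fun t : ℝ => (t : Quaternion ℝ))
      (nhdsWithin 0 {0}ᶜ) (nhdsWithin 0 {0}ᶜ) := by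
    apply Filter.Tendsto.inf
    · have : Continuous (fun t : ℝ => (t : Quaternion ℝ)) := Quaternion.continuous_coe
      simpa using this.tendsto 0
    · refine Filter.tendsto_principal_principal.2 fun t ht => ?_
      simp only [Set.mem_compl_iff, Set.mem_singleton_iff] at *
      exact fun h => ht (by exact_mod_cast congrArg QuaternionAlgebra.re h)
  have h1 : Filter.Tendsto (fun t : ℝ => ((t : Quaternion ℝ)) * Q t * (t : Quaternion ℝ)⁻¹)
      (nhdsWithin 0 {0}ᶜ) (nhds l₀) := hlim.comp hcoe
  have h2 : Filter.Tendsto (fun t : ℝ => ((t : Quaternion ℝ)) * Q t * (t : Quaternion ℝ)⁻¹)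
      (nhdsWithin 0 {0}ᶜ) (nhds (Q 0)) := by
    have hQc : Filter.Tendsto (fun t : ℝ => Q (t : Quaternion ℝ))
        (nhdsWithin 0 {0}ᶜ) (nhds (Q 0)) :=
      hQ.tendsto.comp (hcoe.mono_right nhdsWithin_le_nhds)
    have heq : ∀ t ∈ ({0}ᶜ : Set ℝ),
        ((t : Quaternion ℝ)) * Q t * (t : Quaternion ℝ)⁻¹ = Q t := by
      intro t ht
      have ht' : (t : Quaternion ℝ) ≠ 0 := by
        have := Set.mem_compl_singleton_iff.mp ht
        exact fun h => this (by exact_mod_cast congrArg QuaternionAlgebra.re h)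
      rw [Quaternion.coe_commutes, mul_assoc, mul_inv_cancel₀ ht', mul_one]
    exact hQc.congr' (Filter.eventually_iff_exists_mem.2
      ⟨{0}ᶜ, self_mem_nhdsWithin, fun t ht => (heq t ht).symm⟩)
  exact tendsto_nhds_unique h1 h2
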